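/- Let (X_n) and (Y_n) be stochastic processes on the same probability space with learnable rates of uniform convergence φ₁ and φ₂, respectively. Then φ(λ, ε) := φ₁(λ/2, ε/2) + φ₂(λ/2, ε/2) is a learnable rate of uniform convergence for the process (X_n + Y_n). -/
import Mathlib


open MeasureTheory ENNReal

/-- `φ` is a learnable rate of uniform convergence for the process `Z`: for all
`λ, ε ∈ (0,1)` and all naturals `a₀ < b₀ ≤ a₁ < b₁ ≤ …`, there is `n ≤ φ(λ,ε)` with
`P(∃ i, j ∈ [a n, b n], |Z i - Z j| ≥ ε) < λ`. -/
def IsLearnableRateUnif {Ω : Type} [MeasurableSpace Ω] (μ : Measure Ω)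
    (Z : ℕ → Ω → ℝ) (φ : ℝ → ℝ → ℝ) : Prop :=
  ∀ lam ∈ Set.Ioo (0 : ℝ) 1, ∀ eps ∈ Set.Ioo (0 : ℝ) 1, ∀ a b : ℕ → ℕ,
    (∀ n, a n < b n) → (∀ n, b n ≤ a (n + 1)) →
    ∃ n : ℕ, (n : ℝ) ≤ φ lam eps ∧
      μ {ω | ∃ i ∈ Set.Icc (a n) (b n), ∃ j ∈ Set.Icc (a n) (b n), eps ≤ |Z i ω - Z j ω|}
        < ENNReal.ofReal lam

lemma aux16 {Ω : Type} [MeasurableSpace Ω] (μ : Measure Ω)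
    (Z : ℕ → Ω → ℝ) (φ : ℝ → ℝ → ℝ) (h : IsLearnableRateUnif μ Z φ)
    (lam eps : ℝ) (hlam : lam ∈ Set.Ioo (0:ℝ) 1) (heps : eps ∈ Set.Ioo (0:ℝ) 1)
    (a b : ℕ → ℕ) (hab : ∀ n, a n < b n) (hba : ∀ n, b n ≤ a (n+1))
    (S : Finset ℕ) (hcard : φ lam eps < (S.card : ℝ))
    (hS : ∀ n ∈ S, ENNReal.ofReal lam ≤
      μ {ω | ∃ i ∈ Set.Icc (a n) (b n), ∃ j ∈ Set.Icc (a n) (b n), eps ≤ |Z i ω - Z j ω|}) :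
    False := by
  set m := S.card with hm
  let e : Fin m → ℕ := S.orderEmbOfFin rfl
  let K : ℕ := if hm0 : 0 < m then e ⟨m-1, by omega⟩ + 1 else 0
  let g : ℕ → ℕ := fun i => if hi : i < m then e ⟨i, hi⟩ else i + K
  have hg : StrictMono g := by
    apply strictMono_nat_of_lt_succ
    intro i
    by_cases h1 : i + 1 < m
    · have h0 : i < m := by omega
      simp only [g, dif_pos h0, dif_pos h1]
      exact (S.orderEmbOfFin rfl).strictMono (by simp [Fin.lt_def])
    · by_cases h0 : i < m
      · have hi : i = m - 1 := by omega
        have hm0 : 0 < m := by omega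
        simp only [g, dif_pos h0, dif_neg h1]
        have : K = e ⟨m-1, by omega⟩ + 1 := by simp [K, hm0]
        subst hi
        omega
      · simp only [g, dif_neg h0, dif_neg (by omega : ¬ i + 1 < m)]
        omega
  have haSM : StrictMono a :=
    strictMono_nat_of_lt_succ (fun n => lt_of_lt_of_le (hab n) (hba n))
  obtain ⟨n, hn1, hn2⟩ := h lam hlam eps heps (fun i => a (g i)) (fun i => b (g i))
    (fun i => hab (g i))
    (fun i => le_trans (hba (g i)) (haSM.monotone (Nat.succ_le_of_lt (hg (Nat.lt_succ_self i)))))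
  have hnm : n < m := by
    by_contra hc
    push_neg at hc
    have : (m : ℝ) ≤ (n : ℝ) := by exact_mod_cast hc
    linarith
  have hgn : g n ∈ S := by
    simp only [g, dif_pos hnm]
    exact Finset.orderEmbOfFin_mem S rfl ⟨n, hnm⟩
  exact absurd hn2 (not_lt.2 (hS (g n) hgn))


/-- If `X` and `Y` have learnable rates of uniform convergence `φ₁` and `φ₂` respectively,
then `φ(λ,ε) := φ₁(λ/2, ε/2) + φ₂(λ/2, ε/2)` is a learnable rate of uniform convergence for
the process `X + Y`. -/
theorem stmt16 {Ω : Type} [MeasurableSpace Ω] (μ : Measure Ω) [IsProbabilityMeasure μ]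
    (X Y : ℕ → Ω → ℝ) (hX : ∀ n, Measurable (X n)) (hY : ∀ n, Measurable (Y n))
    (φ₁ φ₂ : ℝ → ℝ → ℝ)
    (h₁ : IsLearnableRateUnif μ X φ₁) (h₂ : IsLearnableRateUnif μ Y φ₂) :
    IsLearnableRateUnif μ (fun n ω => X n ω + Y n ω)
      (fun lam eps => φ₁ (lam / 2) (eps / 2) + φ₂ (lam / 2) (eps / 2)) := by
  intro lam hlam eps heps a b hab hba
  have hlam2 : lam / 2 ∈ Set.Ioo (0:ℝ) 1 := ⟨by linarith [hlam.1], by linarith [hlam.2]⟩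
  have heps2 : eps / 2 ∈ Set.Ioo (0:ℝ) 1 := ⟨by linarith [heps.1], by linarith [heps.2]⟩
  set c₁ := φ₁ (lam / 2) (eps / 2) with hc₁
  set c₂ := φ₂ (lam / 2) (eps / 2) with hc₂
  have hc₁0 : 0 ≤ c₁ := by
    obtain ⟨n, hn, -⟩ := h₁ (lam/2) hlam2 (eps/2) heps2 a b hab hba
    exact le_trans (Nat.cast_nonneg n) hn
  have hc₂0 : 0 ≤ c₂ := by
    obtain ⟨n, hn, -⟩ := h₂ (lam/2) hlam2 (eps/2) heps2 a b hab hba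
    exact le_trans (Nat.cast_nonneg n) hn
  by_contra hcon
  push_neg at hcon
  -- events
  set A : ℕ → Set Ω := fun n =>
    {ω | ∃ i ∈ Set.Icc (a n) (b n), ∃ j ∈ Set.Icc (a n) (b n), eps/2 ≤ |X i ω - X j ω|} with hA
  set B : ℕ → Set Ω := fun n =>
    {ω | ∃ i ∈ Set.Icc (a n) (b n), ∃ j ∈ Set.Icc (a n) (b n), eps/2 ≤ |Y i ω - Y j ω|} with hB
  set N := Nat.floor (c₁ + c₂) with hN
  have key : ∀ n ∈ Finset.range (N+1),
      ENNReal.ofReal (lam/2) ≤ μ (A n) ∨ ENNReal.ofReal (lam/2) ≤ μ (B n) := by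
    intro n hn
    have hnc : (n : ℝ) ≤ c₁ + c₂ := by
      have h1 : n ≤ N := Nat.lt_succ_iff.mp (Finset.mem_range.mp hn)
      calc (n : ℝ) ≤ N := by exact_mod_cast h1
        _ ≤ c₁ + c₂ := Nat.floor_le (by linarith)
    have hE := hcon n hnc
    have hsub : {ω | ∃ i ∈ Set.Icc (a n) (b n), ∃ j ∈ Set.Icc (a n) (b n),
        eps ≤ |X i ω + Y i ω - (X j ω + Y j ω)|} ⊆ A n ∪ B n := by
      intro ω hω
      obtain ⟨i, hi, j, hj, hij⟩ := hω
      by_contra hno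
      have hnA : ω ∉ A n := fun h => hno (Or.inl h)
      have hnB : ω ∉ B n := fun h => hno (Or.inr h)
      have hx : |X i ω - X j ω| < eps/2 := lt_of_not_ge (fun hc => hnA ⟨i, hi, j, hj, hc⟩)
      have hy : |Y i ω - Y j ω| < eps/2 := lt_of_not_ge (fun hc => hnB ⟨i, hi, j, hj, hc⟩)
      have := abs_add_le (X i ω - X j ω) (Y i ω - Y j ω)
      have heq : X i ω + Y i ω - (X j ω + Y j ω) = (X i ω - X j ω) + (Y i ω - Y j ω) := by ring
      rw [heq] at hij
      linarith
    have hle : ENNReal.ofReal lam ≤ μ (A n) + μ (B n) :=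
      le_trans hE (le_trans (measure_mono hsub) (measure_union_le _ _))
    by_contra hnor
    push_neg at hnor
    have hsum : μ (A n) + μ (B n) < ENNReal.ofReal (lam/2) + ENNReal.ofReal (lam/2) :=
      ENNReal.add_lt_add hnor.1 hnor.2
    rw [← ENNReal.ofReal_add (by linarith [hlam.1]) (by linarith [hlam.1])] at hsum
    have : lam / 2 + lam / 2 = lam := by ring
    rw [this] at hsum
    exact absurd hle (not_le.2 hsum)
  set SX := (Finset.range (N+1)).filter (fun n => ENNReal.ofReal (lam/2) ≤ μ (A n)) with hSX
  set SY := (Finset.range (N+1)).filter (fun n => ENNReal.ofReal (lam/2) ≤ μ (B n)) with hSY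
  have hcover : Finset.range (N+1) ⊆ SX ∪ SY := by
    intro n hn
    rcases key n hn with h | h
    · exact Finset.mem_union_left _ (Finset.mem_filter.mpr ⟨hn, h⟩)
    · exact Finset.mem_union_right _ (Finset.mem_filter.mpr ⟨hn, h⟩)
  have hcardsum : N + 1 ≤ SX.card + SY.card := by
    calc N + 1 = (Finset.range (N+1)).card := (Finset.card_range _).symm
      _ ≤ (SX ∪ SY).card := Finset.card_le_card hcover
      _ ≤ SX.card + SY.card := Finset.card_union_le _ _
  have hNlt : c₁ + c₂ < (N : ℝ) + 1 := Nat.lt_floor_add_one _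
  by_cases hcx : c₁ < (SX.card : ℝ)
  · exact aux16 μ X φ₁ h₁ (lam/2) (eps/2) hlam2 heps2 a b hab hba SX hcx
      (fun n hn => (Finset.mem_filter.mp hn).2)
  · push_neg at hcx
    have hcy : c₂ < (SY.card : ℝ) := by
      have : ((N : ℝ) + 1) ≤ (SX.card : ℝ) + (SY.card : ℝ) := by exact_mod_cast hcardsum
      linarith
    exact aux16 μ Y φ₂ h₂ (lam/2) (eps/2) hlam2 heps2 a b hab hba SY hcy
      (fun n hn => (Finset.mem_filter.mp hn).2)
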